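/- For all λ > 0, the maximum of φ_λ over [0,1] equals the supremum of f_λ over [0,1), where φ_λ(q) = λ²k q^{k-1} - log(1 + λ²k q^{k-1}) - λ²(k-1)q^k and f_λ(q) = λ²q^k + log(1-q) + q. -/

import Mathlib

lemma aux_pow (K : ℕ) {q r : ℝ} (hq : 0 ≤ q) (hr : 0 ≤ r) :
    ((K:ℝ)+1) * q^K * r - K * q^(K+1) ≤ r^(K+1) := by
  induction K with
  | zero => simp
  | succ n ih =>
    have h1 : (((n:ℝ)+1) * q^n * r - n * q^(n+1)) * r ≤ r^(n+1) * r :=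
      mul_le_mul_of_nonneg_right ih hr
    have h2 : (0:ℝ) ≤ q^n := pow_nonneg hq n
    push_cast
    have h3 : 0 ≤ q^n * (r - q)^2 := mul_nonneg h2 (sq_nonneg _)
    ring_nf at h1 ⊢
    nlinarith [h1, h3]

theorem stmt_9 (k : ℕ) (hk : 3 ≤ k) (lam : ℝ) (hlam : 0 < lam)
    (f phi : ℝ → ℝ)
    (hf : f = fun q : ℝ => lam ^ 2 * q ^ k + Real.log (1 - q) + q)
    (hphi : phi = fun q : ℝ =>
      lam ^ 2 * k * q ^ (k - 1) - Real.log (1 + lam ^ 2 * k * q ^ (k - 1))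
        - lam ^ 2 * ((k : ℝ) - 1) * q ^ k) :
    ∃ q ∈ Set.Icc (0 : ℝ) 1, IsMaxOn phi (Set.Icc (0 : ℝ) 1) q ∧
      phi q = sSup (f '' Set.Ico (0 : ℝ) 1) := by
  obtain ⟨K, rfl⟩ : ∃ K, k = K + 1 := ⟨k - 1, by omega⟩
  have hK : 2 ≤ K := by omega
  simp only [Nat.add_sub_cancel] at hphi
  -- pointwise: f ≤ phi on [0,1)
  have hfp : ∀ q ∈ Set.Ico (0:ℝ) 1, f q ≤ phi q := by
    intro q hq
    obtain ⟨hq0, hq1⟩ := hq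
    set a : ℝ := lam ^ 2 * (K+1 : ℕ) * q ^ K with ha
    have ha0 : 0 ≤ a := by positivity
    have h1q : 0 < 1 - q := by linarith
    have h1a : (0:ℝ) < 1 + a := by linarith
    have hlog : Real.log ((1 - q) * (1 + a)) ≤ (1 - q) * (1 + a) - 1 :=
      Real.log_le_sub_one_of_pos (by positivity)
    rw [Real.log_mul (ne_of_gt h1q) (ne_of_gt h1a)] at hlog
    have hqk : q ^ (K+1) = q ^ K * q := pow_succ q K
    have hexp : (1 - q) * (1 + a) - 1 = a - q - a * q := by ring
    have haq : lam ^ 2 * q ^ (K+1) + lam ^ 2 * (((K:ℝ)+1) - 1) * q ^ (K+1) = a * q := by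
      rw [ha, hqk]; push_cast; ring
    rw [hf, hphi]
    simp only
    rw [← ha]
    push_cast
    push_cast at haq
    linarith [hlog, hexp, haq]
  -- continuity of phi on Icc
  have hcont : ContinuousOn phi (Set.Icc (0:ℝ) 1) := by
    rw [hphi]
    apply ContinuousOn.sub
    apply ContinuousOn.sub
    · exact Continuous.continuousOn (by continuity)
    · apply ContinuousOn.log
      · exact Continuous.continuousOn (by continuity)
      · intro x hx
        have : (0:ℝ) ≤ x ^ K := pow_nonneg hx.1 K
        positivity
    · exact Continuous.continuousOn (by continuity)
  obtain ⟨qh, hqhmem, hmax⟩ := (isCompact_Icc).exists_isMaxOn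
    (Set.nonempty_Icc.2 zero_le_one) hcont
  -- phi q ≤ f r for some r ∈ Ico
  have hpf : ∀ q ∈ Set.Icc (0:ℝ) 1, ∃ r ∈ Set.Ico (0:ℝ) 1, phi q ≤ f r := by
    intro q hq
    obtain ⟨hq0, hq1⟩ := hq
    set a : ℝ := lam ^ 2 * (K+1 : ℕ) * q ^ K with ha
    have ha0 : 0 ≤ a := by positivity
    have h1a : (0:ℝ) < 1 + a := by linarith
    refine ⟨a / (1 + a), ⟨div_nonneg ha0 h1a.le, (div_lt_one h1a).2 (by linarith)⟩, ?_⟩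
    set r : ℝ := a / (1 + a) with hr
    have hr0 : 0 ≤ r := div_nonneg ha0 h1a.le
    have hrid : r * (1 + a) = a := by rw [hr]; field_simp
    have h1r : 1 - r = (1 + a)⁻¹ := by rw [hr]; field_simp [h1a.ne']; ring
    have key : ((K:ℝ)+1) * q^K * r - K * q^(K+1) ≤ r^(K+1) := aux_pow K hq0 hr0
    rw [hf, hphi]
    simp only
    rw [← ha, h1r, Real.log_inv]
    push_cast
    have hkey2 : lam ^ 2 * (((K:ℝ)+1) * q ^ K * r) - lam ^ 2 * ((K:ℝ) * q ^ (K+1)) ≤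
        lam ^ 2 * r ^ (K+1) := by nlinarith [mul_le_mul_of_nonneg_left key (sq_nonneg lam)]
    have haR : a * r = lam ^ 2 * (((K:ℝ)+1) * q ^ K * r) := by rw [ha]; push_cast; ring
    nlinarith [hkey2, haR, hrid]
  -- conclude
  have hne : (f '' Set.Ico (0:ℝ) 1).Nonempty :=
    ⟨f 0, Set.mem_image_of_mem f ⟨le_refl 0, zero_lt_one⟩⟩
  have hbdd : BddAbove (f '' Set.Ico (0:ℝ) 1) := by
    refine ⟨phi qh, ?_⟩
    rintro y ⟨q, hq, rfl⟩
    exact (hfp q hq).trans (hmax (Set.mem_Icc.2 ⟨hq.1, hq.2.le⟩))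
  refine ⟨qh, hqhmem, hmax, le_antisymm ?_ ?_⟩
  · obtain ⟨r, hr, hle⟩ := hpf qh hqhmem
    exact hle.trans (le_csSup hbdd (Set.mem_image_of_mem f hr))
  · refine csSup_le hne ?_
    rintro y ⟨q, hq, rfl⟩
    exact (hfp q hq).trans (hmax (Set.mem_Icc.2 ⟨hq.1, hq.2.le⟩))
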